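/- Let $\hat{W}_n = \sum_j X_{n,j}/n$ with $X_{n,j}$ independent Binomial$(n,p_j)$, $W = \sum_j p_j<\infty$. For every $\delta\in(0,1)$, $\mathbb{P}\big(W - \hat{W}_n > \sqrt{\tfrac{2W}{n}\log(1/\delta)}\big) \leq \delta$, and consequently with probability at least $1-\delta$, $W \leq \big(\sqrt{\hat{W}_n + \tfrac{\log(1/\delta)}{2n}} + \sqrt{\tfrac{\log(1/\delta)}{2n}}\big)^2$. -/

import Mathlib

open MeasureTheory ProbabilityTheory Real Filter

lemma exp_neg_le_quadratic {t : ℝ} (ht : 0 ≤ t) : Real.exp (-t) ≤ 1 - t + t ^ 2 / 2 := by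
  have key : AntitoneOn (fun t => Real.exp (-t) - (1 - t + t ^ 2 / 2)) (Set.Ici 0) := by
    apply antitoneOn_of_deriv_nonpos (convex_Ici 0)
    · fun_prop
    · fun_prop
    · intro x hx
      have hd : HasDerivAt (fun t => Real.exp (-t) - (1 - t + t ^ 2 / 2))
          (-Real.exp (-x) - (-1 + x)) x := by
        have h1 : HasDerivAt (fun t : ℝ => Real.exp (-t)) (-Real.exp (-x)) x := by
          convert (hasDerivAt_neg x).exp using 1; ring
        have h2 : HasDerivAt (fun t : ℝ => 1 - t + t ^ 2 / 2) (-1 + x) x := by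
          have : HasDerivAt (fun t : ℝ => 1 - t + t ^ 2 / 2) (0 - 1 + 2 * x ^ 1 / 2) x :=
            (((hasDerivAt_const x (1:ℝ)).sub (hasDerivAt_id x)).add
              ((hasDerivAt_pow 2 x).div_const 2))
          simpa using this
        exact h1.sub h2
      rw [hd.deriv]
      have := Real.add_one_le_exp (-x)
      linarith
  have h0 := key (Set.self_mem_Ici) (Set.mem_Ici.2 ht) ht
  simpa using h0

lemma quad_key {W w a b c : ℝ} (hb0 : 0 ≤ b) (hc0 : 0 ≤ c)
    (ha2 : a ^ 2 = W) (hω2 : W - w ≤ 2 * (a * b)) (hc2 : c ^ 2 = w + b ^ 2) :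
    W ≤ (c + b) ^ 2 := by
  have habc : a - b ≤ c := by
    have hsq : (a - b) ^ 2 ≤ c ^ 2 := by nlinarith
    nlinarith [sq_nonneg (a - b - c), sq_nonneg (a - b + c)]
  nlinarith [mul_nonneg hb0 hc0, mul_nonneg hb0 hb0]

lemma binom_mgf {Ω : Type*} [MeasurableSpace Ω] (μ : Measure Ω) [IsProbabilityMeasure μ]
    (n : ℕ) (q : ℝ) (hq0 : 0 ≤ q) (hq1 : q ≤ 1) (Y : Ω → ℕ) (hY : Measurable Y)
    (hb : ∀ k, μ {ω | Y ω = k} = ENNReal.ofReal ((n.choose k : ℝ) * q ^ k * (1 - q) ^ (n - k)))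
    (u : ℝ) (hu : u ≤ 0) :
    mgf (fun ω => (Y ω : ℝ)) μ u = (q * Real.exp u + (1 - q)) ^ n := by
  have hmap : ∀ k : ℕ, (μ.map Y) {k}
      = ENNReal.ofReal ((n.choose k : ℝ) * q ^ k * (1 - q) ^ (n - k)) := by
    intro k
    rw [Measure.map_apply hY (measurableSet_singleton k)]
    exact hb k
  have : IsProbabilityMeasure (μ.map Y) := Measure.isProbabilityMeasure_map hY.aemeasurable
  have hint : Integrable (fun k : ℕ => Real.exp (u * k)) (μ.map Y) := by
    refine Integrable.mono' (integrable_const 1)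
      measurable_from_nat.aestronglyMeasurable (ae_of_all _ fun k => ?_)
    rw [Real.norm_eq_abs, abs_of_pos (Real.exp_pos _)]
    exact Real.exp_le_one_iff.2 (mul_nonpos_of_nonpos_of_nonneg hu (Nat.cast_nonneg k))
  have h1 : mgf (fun ω => (Y ω : ℝ)) μ u = ∫ k : ℕ, Real.exp (u * k) ∂(μ.map Y) := by
    rw [mgf, integral_map hY.aemeasurable measurable_from_nat.aestronglyMeasurable]
  rw [h1, integral_countable' hint]
  have hterm : ∀ k : ℕ, ((μ.map Y) {k}).toReal • Real.exp (u * k)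
      = ((n.choose k : ℝ) * (q * Real.exp u) ^ k * (1 - q) ^ (n - k)) := by
    intro k
    rw [hmap k, smul_eq_mul, ENNReal.toReal_ofReal (by
      have h1q : (0:ℝ) ≤ 1 - q := by linarith
      positivity)]
    rw [mul_pow, ← Real.exp_nat_mul]
    ring_nf
  simp_rw [measureReal_def, hterm]
  rw [tsum_eq_sum (s := Finset.range (n + 1)) (fun k hk => by
    have hnk : n < k := by
      simpa using Nat.succ_le_of_lt (Nat.lt_of_not_le
        (fun h => hk (Finset.mem_range.2 (Nat.lt_succ_of_le h))))
    rw [Nat.choose_eq_zero_of_lt hnk]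
    simp)]
  rw [add_pow]
  exact Finset.sum_congr rfl fun k hk => by ring

theorem stmt
    {Ω : Type*} [MeasurableSpace Ω] (μ : Measure Ω) [IsProbabilityMeasure μ]
    (p : ℕ → ℝ) (hp : ∀ j, p j ∈ Set.Ioo (0 : ℝ) 1) (hsum : Summable p)
    (n : ℕ) (X : ℕ → Ω → ℕ)
    (hmeas : ∀ j, Measurable (X j))
    (hindep : iIndepFun X μ)
    (hbin : ∀ j k, μ {ω | X j ω = k} =
      ENNReal.ofReal ((n.choose k : ℝ) * p j ^ k * (1 - p j) ^ (n - k)))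
    (W : ℝ) (hW : ∑' j, p j = W) (hn : 1 ≤ n)
    (δ : ℝ) (hδ : δ ∈ Set.Ioo (0 : ℝ) 1) :
    μ {ω | W - (∑' j, (X j ω : ℝ)) / n > Real.sqrt (2 * W / n * Real.log (1 / δ))}
      ≤ ENNReal.ofReal δ ∧
    ENNReal.ofReal (1 - δ) ≤
      μ {ω | W ≤ (Real.sqrt ((∑' j, (X j ω : ℝ)) / n + Real.log (1 / δ) / (2 * n))
          + Real.sqrt (Real.log (1 / δ) / (2 * n))) ^ 2} := by
  obtain ⟨hδ0, hδ1⟩ := hδ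
  have hn0 : (0:ℝ) < n := by exact_mod_cast hn
  set L := Real.log (1 / δ) with hLdef
  have hL0 : 0 < L := Real.log_pos (by rw [lt_div_iff₀ hδ0]; linarith)
  have hLδ : L = - Real.log δ := by rw [hLdef, one_div, Real.log_inv]
  have hW0 : 0 < W := by
    rw [← hW]
    exact lt_of_lt_of_le (hp 0).1 (hsum.le_tsum 0 (fun j _ => (hp j).1.le))
  set s := Real.sqrt (2 * W / n * L) with hsdef
  have h2WnL : (0:ℝ) ≤ 2 * W / n * L := by positivity
  have hs0 : 0 < s := Real.sqrt_pos.2 (by positivity)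
  have hs2 : s ^ 2 = 2 * W / n * L := Real.sq_sqrt h2WnL
  set t := s / W with htdef
  have ht0 : 0 < t := div_pos hs0 hW0
  set Y : ℕ → Ω → ℝ := fun j ω => (X j ω : ℝ) with hYdef
  have hYm : ∀ j, Measurable (Y j) := fun j => measurable_from_nat.comp (hmeas j)
  have hYnn : ∀ j ω, 0 ≤ Y j ω := fun j ω => Nat.cast_nonneg _
  have hYindep : iIndepFun Y μ :=
    hindep.comp (fun _ (k : ℕ) => (k : ℝ)) (fun _ => measurable_from_nat)
  -- integrability of exp(-t * Y j)
  have hYint : ∀ j, Integrable (fun ω => Real.exp (-t * Y j ω)) μ := by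
    intro j
    refine Integrable.mono' (integrable_const 1)
      (((hYm j).const_mul (-t)).exp.aestronglyMeasurable) (ae_of_all _ fun ω => ?_)
    rw [Real.norm_eq_abs, abs_of_pos (Real.exp_pos _)]
    exact Real.exp_le_one_iff.2 (mul_nonpos_of_nonpos_of_nonneg (by linarith) (hYnn j ω))
  -- per-coordinate mgf bound
  have hmgf_le : ∀ j, mgf (Y j) μ (-t) ≤ Real.exp (n * p j * (t ^ 2 / 2 - t)) := by
    intro j
    rw [binom_mgf μ n (p j) (hp j).1.le (hp j).2.le (X j) (hmeas j) (hbin j) (-t)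
      (by linarith)]
    have hbase0 : 0 ≤ p j * Real.exp (-t) + (1 - p j) := by
      have := (hp j).2
      have := Real.exp_pos (-t)
      nlinarith [(hp j).1]
    have hstep1 : p j * Real.exp (-t) + (1 - p j) ≤ Real.exp (p j * (t ^ 2 / 2 - t)) := by
      have hq := exp_neg_le_quadratic ht0.le
      have h1 : p j * Real.exp (-t) + (1 - p j) ≤ 1 + p j * (t ^ 2 / 2 - t) := by
        nlinarith [(hp j).1]
      exact h1.trans (by linarith [Real.add_one_le_exp (p j * (t ^ 2 / 2 - t))])
    calc (p j * Real.exp (-t) + (1 - p j)) ^ n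
        ≤ (Real.exp (p j * (t ^ 2 / 2 - t))) ^ n := pow_le_pow_left₀ hbase0 hstep1 n
      _ = Real.exp (n * p j * (t ^ 2 / 2 - t)) := by
          rw [← Real.exp_nat_mul]; ring_nf
  -- Chernoff bound for partial sums
  set P : ℕ → ℝ := fun m => ∑ j ∈ Finset.range m, p j with hPdef
  have hPleW : ∀ m, P m ≤ W := fun m =>
    hW ▸ Summable.sum_le_tsum (Finset.range m) (fun j _ => (hp j).1.le) hsum
  set A : ℕ → Set Ω := fun m => {ω | (∑ j ∈ Finset.range m, Y j) ω ≤ n * (W - s)} with hAdef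
  have hchern : ∀ m, μ (A m) ≤ ENNReal.ofReal (Real.exp (t * n * (W - P m)) * δ) := by
    intro m
    have hintsum : Integrable (fun ω => Real.exp (-t * (∑ j ∈ Finset.range m, Y j) ω)) μ :=
      hYindep.integrable_exp_mul_sum hYm (fun j _ => hYint j)
    have hch := measure_le_le_exp_mul_mgf (μ := μ) (X := ∑ j ∈ Finset.range m, Y j)
      (n * (W - s)) (t := -t) (by linarith) hintsum
    rw [hYindep.mgf_sum hYm] at hch
    have hprod : ∏ j ∈ Finset.range m, mgf (Y j) μ (-t)
        ≤ Real.exp (∑ j ∈ Finset.range m, n * p j * (t ^ 2 / 2 - t)) := by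
      rw [Real.exp_sum]
      exact Finset.prod_le_prod (fun j _ => mgf_nonneg) (fun j _ => hmgf_le j)
    have hEbound : Real.exp (- -t * (n * (W - s))) *
          ∏ j ∈ Finset.range m, mgf (Y j) μ (-t)
        ≤ Real.exp (t * n * (W - P m)) * δ := by
      rw [neg_neg]
      calc Real.exp (t * (n * (W - s))) * ∏ j ∈ Finset.range m, mgf (Y j) μ (-t)
          ≤ Real.exp (t * (n * (W - s))) *
            Real.exp (∑ j ∈ Finset.range m, n * p j * (t ^ 2 / 2 - t)) := by
            exact mul_le_mul_of_nonneg_left hprod (Real.exp_pos _).le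
        _ = Real.exp (t * (n * (W - s)) + n * (t^2/2 - t) * P m) := by
            have hsc : ∑ j ∈ Finset.range m, (n:ℝ) * p j * (t^2/2 - t)
                = (n:ℝ) * (t^2/2 - t) * P m := by
              rw [hPdef, Finset.mul_sum]
              exact Finset.sum_congr rfl fun j _ => by ring
            rw [← Real.exp_add, hsc]
        _ ≤ Real.exp (t * n * (W - P m) + Real.log δ) := by
            apply Real.exp_le_exp.2
            have hts : s = t * W := by
              rw [htdef]; field_simp
            have hns2 : n * s ^ 2 = 2 * W * L := by
              rw [hs2]; field_simp
            have hntW : (n:ℝ) * W * t ^ 2 = 2 * L := by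
              have h3 : W * ((n:ℝ) * W * t ^ 2) = W * (2 * L) := by
                rw [hts] at hns2; linear_combination hns2
              exact mul_left_cancel₀ hW0.ne' h3
            have hsns : t * n * s = 2 * L := by
              rw [hts]; linear_combination hntW
            have hPt2 : (n:ℝ) * P m * t ^ 2 ≤ n * W * t ^ 2 :=
              mul_le_mul_of_nonneg_right
                (mul_le_mul_of_nonneg_left (hPleW m) hn0.le) (sq_nonneg t)
            have hlogδ : Real.log δ = -L := by rw [hLδ]; ring
            rw [hlogδ]
            nlinarith [hPt2, hntW, hsns]
        _ = Real.exp (t * n * (W - P m)) * δ := by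
            rw [Real.exp_add, Real.exp_log hδ0]
    have hA : μ (A m) ≠ ⊤ := measure_ne_top μ _
    rw [← ENNReal.ofReal_toReal hA]
    exact ENNReal.ofReal_le_ofReal (hch.trans hEbound)
  -- Borel–Cantelli: the set of non-finitely-supported ω is null
  set B : ℕ → Set Ω := fun j => (X j ⁻¹' {0})ᶜ with hBdef
  have hB0 : ∀ j, μ (X j ⁻¹' {0}) = ENNReal.ofReal ((1 - p j) ^ n) := by
    intro j
    have := hbin j 0
    simpa using (by exact this : μ (X j ⁻¹' {0}) = ENNReal.ofReal ((n.choose 0 : ℝ) * p j ^ 0 * (1 - p j) ^ (n - 0)))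
  have hBle : ∀ j, μ (B j) ≤ ENNReal.ofReal (n * p j) := by
    intro j
    rw [hBdef]
    rw [measure_compl (hmeas j (measurableSet_singleton 0)) (measure_ne_top μ _),
      measure_univ, hB0 j]
    rw [tsub_le_iff_right, ← ENNReal.ofReal_add
      (mul_nonneg (Nat.cast_nonneg n) (hp j).1.le)
      (pow_nonneg (by linarith [(hp j).2]) n)]
    rw [← ENNReal.ofReal_one]
    apply ENNReal.ofReal_le_ofReal
    have hbp := one_add_mul_le_pow (a := -p j) (by nlinarith [(hp j).2]) n
    push_cast at hbp ⊢
    rw [show (1:ℝ) + -p j = 1 - p j by ring] at hbp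
    linarith [hbp]
  have hBsum : ∑' j, μ (B j) ≠ ⊤ := by
    have h1 : ∑' j, μ (B j) ≤ ∑' j, ENNReal.ofReal ((n:ℝ) * p j) :=
      ENNReal.tsum_le_tsum hBle
    have h2 : ∑' j, ENNReal.ofReal ((n:ℝ) * p j) = ENNReal.ofReal (∑' j, (n:ℝ) * p j) :=
      (ENNReal.ofReal_tsum_of_nonneg (fun j => mul_nonneg (Nat.cast_nonneg n) (hp j).1.le)
        (hsum.mul_left _)).symm
    rw [h2] at h1
    exact ne_top_of_le_ne_top ENNReal.ofReal_ne_top h1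
  have hN : μ (Filter.limsup B Filter.atTop) = 0 := measure_limsup_atTop_eq_zero hBsum
  -- event inclusion
  have hsub : {ω | W - (∑' j, Y j ω) / n > s} ⊆ (⋂ m, A m) ∪ Filter.limsup B Filter.atTop := by
    intro ω hω
    by_cases hmem : ω ∈ Filter.limsup B Filter.atTop
    · exact Or.inr hmem
    · left
      rw [Filter.mem_limsup_iff_frequently_mem, Filter.not_frequently] at hmem
      obtain ⟨J, hJ⟩ := Filter.eventually_atTop.1 hmem
      have hsummable : Summable (fun j => Y j ω) := by
        apply summable_of_ne_finset_zero (s := Finset.range J)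
        intro j hj
        have hJj : J ≤ j := by simpa [Finset.mem_range, not_lt] using hj
        have := hJ j hJj
        simp only [hBdef, Set.mem_compl_iff, Set.mem_preimage, Set.mem_singleton_iff,
          not_not] at this
        simp [hYdef, this]
      have hω' : (∑' j, Y j ω) < n * (W - s) := by
        have h1 : (∑' j, Y j ω) / n < W - s := by
          simp only [Set.mem_setOf_eq] at hω
          linarith
        calc (∑' j, Y j ω) = (∑' j, Y j ω) / n * n := by field_simp
          _ < (W - s) * n := by exact mul_lt_mul_of_pos_right h1 hn0
          _ = n * (W - s) := by ring
      refine Set.mem_iInter.2 fun m => ?_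
      have hle : (∑ j ∈ Finset.range m, Y j) ω ≤ ∑' j, Y j ω := by
        rw [Finset.sum_apply]
        exact Summable.sum_le_tsum _ (fun j _ => hYnn j ω) hsummable
      exact le_of_lt (lt_of_le_of_lt hle hω')
  have hEA : ∀ m, μ {ω | W - (∑' j, Y j ω) / n > s} ≤ μ (A m) := by
    intro m
    calc μ {ω | W - (∑' j, Y j ω) / n > s}
        ≤ μ ((⋂ m, A m) ∪ Filter.limsup B Filter.atTop) := measure_mono hsub
      _ ≤ μ (⋂ m, A m) + μ (Filter.limsup B Filter.atTop) := measure_union_le _ _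
      _ = μ (⋂ m, A m) := by rw [hN, add_zero]
      _ ≤ μ (A m) := measure_mono (Set.iInter_subset A m)
  -- limit of the Chernoff bounds
  have hPlim : Filter.Tendsto P Filter.atTop (nhds W) := by
    have := hsum.hasSum.tendsto_sum_nat
    rwa [hW] at this
  have hblim : Filter.Tendsto (fun m => ENNReal.ofReal (Real.exp (t * n * (W - P m)) * δ))
      Filter.atTop (nhds (ENNReal.ofReal δ)) := by
    apply (ENNReal.continuous_ofReal.tendsto _).comp
    have h1 : Filter.Tendsto (fun m => t * n * (W - P m)) Filter.atTop (nhds (t * n * (W - W))) :=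
      (Filter.Tendsto.const_mul _ (tendsto_const_nhds.sub hPlim))
    have h2 := (Real.continuous_exp.tendsto _).comp h1
    have h3 := h2.mul_const δ
    simpa using h3
  have part1 : μ {ω | W - (∑' j, Y j ω) / n > s} ≤ ENNReal.ofReal δ :=
    ge_of_tendsto' hblim (fun m => (hEA m).trans (hchern m))
  constructor
  · exact part1
  · -- part 2
    set L' := L / (2 * (n:ℝ)) with hL'def
    have hL'0 : 0 ≤ L' := by positivity
    have hcompl : {ω | W - (∑' j, Y j ω) / n > s}ᶜ ⊆
        {ω | W ≤ (Real.sqrt ((∑' j, (X j ω : ℝ)) / n + L') + Real.sqrt L') ^ 2} := by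
      intro ω hω
      simp only [Set.mem_compl_iff, Set.mem_setOf_eq, not_lt] at hω
      set w := (∑' j, Y j ω) / n with hwdef
      have hw0 : 0 ≤ w := div_nonneg (tsum_nonneg (fun j => hYnn j ω)) hn0.le
      set a := Real.sqrt W with hadef
      set b := Real.sqrt L' with hbdef
      set c := Real.sqrt (w + L') with hcdef
      have ha2 : a ^ 2 = W := Real.sq_sqrt hW0.le
      have hb2 : b ^ 2 = L' := Real.sq_sqrt hL'0
      have hc2 : c ^ 2 = w + L' := Real.sq_sqrt (by positivity)
      have hb0 : 0 ≤ b := Real.sqrt_nonneg _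
      have hc0 : 0 ≤ c := Real.sqrt_nonneg _
      have ha0 : 0 ≤ a := Real.sqrt_nonneg _
      have hs_ab : s = 2 * (a * b) := by
        rw [hsdef]
        have h4 : 2 * W / n * L = 4 * (W * L') := by
          rw [hL'def]; field_simp; ring
        rw [h4, show (4:ℝ) * (W * L') = (2 * (a * b))^2 by
          rw [mul_pow, mul_pow, ha2, hb2]; ring]
        exact Real.sqrt_sq (by positivity)
      have hω2 : W - w ≤ 2 * (a * b) := by rw [← hs_ab]; exact hω
      exact quad_key hb0 hc0 ha2 hω2 (by rw [hb2]; exact hc2)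
    have hcover : (Set.univ : Set Ω) ⊆
        {ω | W ≤ (Real.sqrt ((∑' j, (X j ω : ℝ)) / n + L') + Real.sqrt L') ^ 2} ∪
        {ω | W - (∑' j, Y j ω) / n > s} := by
      intro ω _
      by_cases h : W - (∑' j, Y j ω) / n > s
      · exact Or.inr h
      · exact Or.inl (hcompl h)
    have h1 : (1 : ENNReal) ≤
        μ {ω | W ≤ (Real.sqrt ((∑' j, (X j ω : ℝ)) / n + L') + Real.sqrt L') ^ 2}
        + ENNReal.ofReal δ := by
      calc (1 : ENNReal) = μ Set.univ := (measure_univ).symm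
        _ ≤ μ ({ω | W ≤ (Real.sqrt ((∑' j, (X j ω : ℝ)) / n + L') + Real.sqrt L') ^ 2} ∪
            {ω | W - (∑' j, Y j ω) / n > s}) := measure_mono hcover
        _ ≤ μ {ω | W ≤ (Real.sqrt ((∑' j, (X j ω : ℝ)) / n + L') + Real.sqrt L') ^ 2}
            + μ {ω | W - (∑' j, Y j ω) / n > s} := measure_union_le _ _
        _ ≤ _ := add_le_add_right part1 _
    have h2 : ENNReal.ofReal (1 - δ) + ENNReal.ofReal δ ≤
        μ {ω | W ≤ (Real.sqrt ((∑' j, (X j ω : ℝ)) / n + L') + Real.sqrt L') ^ 2}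
        + ENNReal.ofReal δ := by
      rw [← ENNReal.ofReal_add (by linarith) hδ0.le]
      simpa using h1
    exact (ENNReal.add_le_add_iff_right ENNReal.ofReal_ne_top).1 h2
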